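/- Let H ∈ ℝ^{n×n} be symmetric positive semidefinite, G, D, V ∈ ℝ^{n×m} with ‖D‖_0 ≤ k, ρ > 0, W = (H + ρI)^{-1}(G - V + ρD), and D⁺ = P_k(W + V/ρ). Then ‖D⁺ - D‖_F ≤ (2/ρ)(‖G - H D‖_F + ‖H V‖_F/ρ). -/

import Mathlib

open scoped Classical

/-- Frobenius norm of a real matrix. -/
noncomputable def frob {n m : ℕ} (A : Matrix (Fin n) (Fin m) ℝ) : ℝ :=
  Real.sqrt (∑ i, ∑ j, (A i j) ^ 2)

/-- Spectral norm (operator 2-norm, largest singular value) of a real matrix. -/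
noncomputable def spec {n m : ℕ} (A : Matrix (Fin n) (Fin m) ℝ) : ℝ :=
  ‖LinearMap.toContinuousLinearMap (Matrix.toEuclideanLin A)‖

/-- Number of nonzero entries of a matrix (the ℓ₀-"norm"). -/
noncomputable def l0 {n m : ℕ} (A : Matrix (Fin n) (Fin m) ℝ) : ℕ :=
  (Finset.univ.filter fun p : Fin n × Fin m => A p.1 p.2 ≠ 0).card
-- helper lemmas on frob
lemma frob_nonneg {n m : ℕ} (A : Matrix (Fin n) (Fin m) ℝ) : 0 ≤ frob A :=
  Real.sqrt_nonneg _

lemma frob_eq_norm {n m : ℕ} (A : Matrix (Fin n) (Fin m) ℝ) :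
    frob A = ‖(WithLp.equiv 2 (Fin n × Fin m → ℝ)).symm (fun p => A p.1 p.2)‖ := by
  rw [EuclideanSpace.norm_eq, frob]
  congr 1
  rw [Fintype.sum_prod_type]
  simp [Real.norm_eq_abs, sq_abs]

lemma frob_neg {n m : ℕ} (A : Matrix (Fin n) (Fin m) ℝ) : frob (-A) = frob A := by
  simp [frob]

lemma frob_add_le {n m : ℕ} (A B : Matrix (Fin n) (Fin m) ℝ) :
    frob (A + B) ≤ frob A + frob B := by
  simp only [frob_eq_norm]
  have : ((WithLp.equiv 2 (Fin n × Fin m → ℝ)).symm (fun p => (A + B) p.1 p.2)) =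
      ((WithLp.equiv 2 (Fin n × Fin m → ℝ)).symm (fun p => A p.1 p.2)) +
      ((WithLp.equiv 2 (Fin n × Fin m → ℝ)).symm (fun p => B p.1 p.2)) := rfl
  rw [this]
  exact norm_add_le _ _

lemma frob_smul {n m : ℕ} (c : ℝ) (A : Matrix (Fin n) (Fin m) ℝ) :
    frob (c • A) = |c| * frob A := by
  simp only [frob, Matrix.smul_apply, smul_eq_mul, mul_pow, ← Finset.mul_sum]
  rw [Real.sqrt_mul (sq_nonneg c), Real.sqrt_sq_eq_abs]

lemma frob_comm {n m : ℕ} (A : Matrix (Fin n) (Fin m) ℝ) :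
    frob A = Real.sqrt (∑ j, ∑ i, (A i j) ^ 2) := by
  rw [frob, Finset.sum_comm]

open Matrix in
lemma key_bound {n m : ℕ} (H : Matrix (Fin n) (Fin n) ℝ) (hH : H.PosSemidef)
    (ρ : ℝ) (hρ : 0 < ρ) (X M : Matrix (Fin n) (Fin m) ℝ)
    (h : (H + ρ • 1) * X = M) : frob X ≤ ρ⁻¹ * frob M := by
  have hcol : ∀ j, ρ ^ 2 * (∑ i, (X i j) ^ 2) ≤ ∑ i, (M i j) ^ 2 := by
    intro j
    have hyx : (fun i => M i j) = (H + ρ • 1).mulVec (fun i => X i j) := by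
      funext i
      rw [← h]
      simp [Matrix.mulVec, Matrix.mul_apply, dotProduct]
    have hs0 : 0 ≤ ∑ i, (X i j) ^ 2 := Finset.sum_nonneg fun i _ => sq_nonneg _
    have ht0 : 0 ≤ ∑ i, (M i j) ^ 2 := Finset.sum_nonneg fun i _ => sq_nonneg _
    have hlow : ρ * ∑ i, (X i j) ^ 2 ≤ (fun i => X i j) ⬝ᵥ (fun i => M i j) := by
      rw [hyx, Matrix.add_mulVec, dotProduct_add]
      have h1 : 0 ≤ (fun i => X i j) ⬝ᵥ H.mulVec (fun i => X i j) := by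
        have := hH.dotProduct_mulVec_nonneg (fun i => X i j)
        simpa using this
      have h2 : (fun i => X i j) ⬝ᵥ ((ρ • (1 : Matrix (Fin n) (Fin n) ℝ)).mulVec
          (fun i => X i j)) = ρ * ∑ i, (X i j) ^ 2 := by
        rw [Matrix.smul_mulVec, Matrix.one_mulVec, dotProduct_smul]
        simp [dotProduct, Finset.mul_sum, sq]
      rw [h2]
      linarith
    have hcs : ((fun i => X i j) ⬝ᵥ (fun i => M i j)) ^ 2 ≤
        (∑ i, (X i j) ^ 2) * (∑ i, (M i j) ^ 2) := by
      simpa [dotProduct] using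
        Finset.sum_mul_sq_le_sq_mul_sq Finset.univ (fun i => X i j) (fun i => M i j)
    have hsq : (ρ * ∑ i, (X i j) ^ 2) ^ 2 ≤ (∑ i, (X i j) ^ 2) * (∑ i, (M i j) ^ 2) := by
      refine le_trans ?_ hcs
      exact pow_le_pow_left₀ (mul_nonneg hρ.le hs0) hlow 2
    rcases eq_or_lt_of_le hs0 with hse | hsl
    · rw [← hse]
      simpa using ht0
    · nlinarith
  have hsum : ρ ^ 2 * (∑ j, ∑ i, (X i j) ^ 2) ≤ ∑ j, ∑ i, (M i j) ^ 2 := by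
    rw [Finset.mul_sum]
    exact Finset.sum_le_sum fun j _ => hcol j
  rw [frob_comm, frob_comm]
  have h1 : (∑ j, ∑ i, (X i j) ^ 2) ≤ ρ⁻¹ ^ 2 * (∑ j, ∑ i, (M i j) ^ 2) := by
    rw [← le_div_iff₀' (by positivity)] at hsum
    calc ∑ j, ∑ i, (X i j) ^ 2 ≤ (∑ j, ∑ i, (M i j) ^ 2) / ρ ^ 2 := hsum
      _ = ρ⁻¹ ^ 2 * (∑ j, ∑ i, (M i j) ^ 2) := by field_simp
  calc √(∑ j, ∑ i, (X i j) ^ 2) ≤ √(ρ⁻¹ ^ 2 * (∑ j, ∑ i, (M i j) ^ 2)) :=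
        Real.sqrt_le_sqrt h1
    _ = ρ⁻¹ * √(∑ j, ∑ i, (M i j) ^ 2) := by
        rw [Real.sqrt_mul (sq_nonneg _), Real.sqrt_sq (by positivity)]

open Matrix in
lemma posdef_shift {n : ℕ} (H : Matrix (Fin n) (Fin n) ℝ) (hH : H.PosSemidef)
    (ρ : ℝ) (hρ : 0 < ρ) : (H + ρ • (1 : Matrix (Fin n) (Fin n) ℝ)).PosDef := by
  rw [Matrix.posDef_iff_dotProduct_mulVec]
  constructor
  · refine hH.1.add ?_
    simp [Matrix.IsHermitian]
  · intro x hx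
    have h1 : 0 ≤ x ⬝ᵥ H.mulVec x := by simpa using hH.dotProduct_mulVec_nonneg x
    have h2 : 0 < x ⬝ᵥ x := by
      have : x ⬝ᵥ x = ∑ i, (x i) ^ 2 := by simp [dotProduct, sq]
      rw [this]
      rcases Function.ne_iff.1 hx with ⟨i, hi⟩
      have hi' : x i ≠ 0 := by simpa using hi
      have : (0:ℝ) < x i ^ 2 := by positivity
      exact lt_of_lt_of_le this (Finset.single_le_sum (fun i _ => sq_nonneg (x i)) (Finset.mem_univ i))
    have : x ⬝ᵥ (H + ρ • 1).mulVec x = x ⬝ᵥ H.mulVec x + ρ * (x ⬝ᵥ x) := by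
      rw [Matrix.add_mulVec, dotProduct_add, Matrix.smul_mulVec,
        Matrix.one_mulVec, dotProduct_smul, smul_eq_mul]
    simp only [RCLike.re_to_real, star_trivial]
    rw [this]
    nlinarith

/-- second conclusion of Lemma 1 of the ALPS paper. -/
theorem alps_lemma1_D_bound {n m k : ℕ} (H : Matrix (Fin n) (Fin n) ℝ)
    (hH : H.PosSemidef) (G D V : Matrix (Fin n) (Fin m) ℝ)
    (ρ : ℝ) (hρ : 0 < ρ) (hD : l0 D ≤ k)
    (W Dplus : Matrix (Fin n) (Fin m) ℝ)
    (hWdef : W = (H + ρ • 1)⁻¹ * (G - V + ρ • D))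
    (hDplus_sparse : l0 Dplus ≤ k)
    (hDplus_best : ∀ B : Matrix (Fin n) (Fin m) ℝ, l0 B ≤ k →
      frob (Dplus - (W + ρ⁻¹ • V)) ≤ frob (B - (W + ρ⁻¹ • V))) :
    frob (Dplus - D) ≤ (2 / ρ) * (frob (G - H * D) + frob (H * V) / ρ) := by
  set A : Matrix (Fin n) (Fin n) ℝ := H + ρ • 1 with hA
  have hApd : A.PosDef := posdef_shift H hH ρ hρ
  have hAinv : A * A⁻¹ = 1 :=
    Matrix.mul_nonsing_inv _ ((Matrix.isUnit_iff_isUnit_det _).1 hApd.isUnit)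
  -- the key algebraic identity
  have hXM : A * (W + ρ⁻¹ • V - D) = G - H * D + ρ⁻¹ • (H * V) := by
    rw [hWdef, Matrix.mul_sub, Matrix.mul_add, ← Matrix.mul_assoc, hAinv, Matrix.one_mul]
    have h1 : A * (ρ⁻¹ • V) = ρ⁻¹ • (H * V) + V := by
      rw [Matrix.mul_smul, hA, Matrix.add_mul, Matrix.smul_mul, Matrix.one_mul,
        smul_add, smul_smul, inv_mul_cancel₀ hρ.ne', one_smul]
    have h2 : A * D = H * D + ρ • D := by
      rw [hA, Matrix.add_mul, Matrix.smul_mul, Matrix.one_mul]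
    rw [h1, h2]
    abel
  have hE : frob (W + ρ⁻¹ • V - D) ≤ ρ⁻¹ * frob (G - H * D + ρ⁻¹ • (H * V)) :=
    key_bound H hH ρ hρ _ _ hXM
  have hM : frob (G - H * D + ρ⁻¹ • (H * V)) ≤ frob (G - H * D) + ρ⁻¹ * frob (H * V) := by
    refine (frob_add_le _ _).trans ?_
    rw [frob_smul, abs_of_pos (by positivity)]
  have htri : frob (Dplus - D) ≤ frob (Dplus - (W + ρ⁻¹ • V)) + frob (W + ρ⁻¹ • V - D) := by
    have : Dplus - D = (Dplus - (W + ρ⁻¹ • V)) + (W + ρ⁻¹ • V - D) := by abel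
    rw [this]
    exact frob_add_le _ _
  have hbest : frob (Dplus - (W + ρ⁻¹ • V)) ≤ frob (W + ρ⁻¹ • V - D) := by
    have h := hDplus_best D hD
    have : D - (W + ρ⁻¹ • V) = -(W + ρ⁻¹ • V - D) := by abel
    rwa [this, frob_neg] at h
  have hHV : 0 ≤ frob (H * V) := frob_nonneg _
  have hGD : 0 ≤ frob (G - H * D) := frob_nonneg _
  have hρi : (0:ℝ) < ρ⁻¹ := by positivity
  calc frob (Dplus - D) ≤ frob (Dplus - (W + ρ⁻¹ • V)) + frob (W + ρ⁻¹ • V - D) := htri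
    _ ≤ 2 * frob (W + ρ⁻¹ • V - D) := by linarith
    _ ≤ 2 * (ρ⁻¹ * (frob (G - H * D) + ρ⁻¹ * frob (H * V))) := by
        have := hE.trans (by nlinarith : ρ⁻¹ * frob (G - H * D + ρ⁻¹ • (H * V)) ≤
          ρ⁻¹ * (frob (G - H * D) + ρ⁻¹ * frob (H * V)))
        linarith
    _ = (2 / ρ) * (frob (G - H * D) + frob (H * V) / ρ) := by
        field_simp
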